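/- For every closed set K ⊆ ℝⁿ and norm φ, the reach function r_K^φ : N^φ(K) → (0, +∞] is upper semicontinuous on N^φ(K): if (a_i, u_i) ∈ N^φ(K) converge to (a, u) ∈ N^φ(K), then limsup r_K^φ(a_i, u_i) ≤ r_K^φ(a, u). -/

import Mathlib

open Set Filter Metric MeasureTheory Topology ENNReal

noncomputable section

abbrev Euc (n : ℕ) := EuclideanSpace ℝ (Fin n)

def IsNorm {n : ℕ} (φ : Euc n → ℝ) : Prop :=
  (∀ x, φ x = 0 ↔ x = 0) ∧ (∀ (c : ℝ) (x : Euc n), φ (c • x) = |c| * φ x) ∧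
    (∀ x y, φ (x + y) ≤ φ x + φ y)

def StrictlyConvexNorm {n : ℕ} (φ : Euc n → ℝ) : Prop :=
  IsNorm φ ∧ ∀ a b, φ (a + b) = φ a + φ b → φ b • a = φ a • b

def UniformlyConvexNorm {n : ℕ} (φ : Euc n → ℝ) : Prop :=
  IsNorm φ ∧ ∃ γ : ℝ, 0 < γ ∧ ConvexOn ℝ Set.univ (fun x => φ x - γ * ‖x‖)

def distφ {n : ℕ} (φ : Euc n → ℝ) (K : Set (Euc n)) (x : Euc n) : ℝ :=
  sInf {r | ∃ y ∈ K, r = φ (x - y)}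

def nearφ {n : ℕ} (φ : Euc n → ℝ) (K : Set (Euc n)) (x : Euc n) : Set (Euc n) :=
  {a ∈ K | φ (x - a) = distφ φ K x}

def rhoφ {n : ℕ} (φ : Euc n → ℝ) (K : Set (Euc n)) (x : Euc n) : ℝ≥0∞ :=
  sSup {r : ℝ≥0∞ | ∃ s : ℝ, ∃ a ∈ nearφ φ K x,
    r = ENNReal.ofReal s ∧ distφ φ K (a + s • (x - a)) = s * distφ φ K x}

def normalBundle {n : ℕ} (φ : Euc n → ℝ) (K : Set (Euc n)) : Set (Euc n × Euc n) :=
  {p | p.1 ∈ K ∧ φ p.2 = 1 ∧ ∃ s : ℝ, 0 < s ∧ distφ φ K (p.1 + s • p.2) = s}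

def reachφ {n : ℕ} (φ : Euc n → ℝ) (K : Set (Euc n)) (p : Euc n × Euc n) : ℝ≥0∞ :=
  sSup {r : ℝ≥0∞ | ∃ s : ℝ, 0 < s ∧ r = ENNReal.ofReal s ∧ distφ φ K (p.1 + s • p.2) = s}

def cutLocus {n : ℕ} (φ : Euc n → ℝ) (K : Set (Euc n)) : Set (Euc n) :=
  {x | ∃ p ∈ normalBundle φ K, reachφ φ K p ≠ ⊤ ∧
    x = p.1 + (reachφ φ K p).toReal • p.2}

def PtTwiceDiffAt {n : ℕ} (f : Euc n → ℝ) (x : Euc n) : Prop :=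
  ∃ (L : Euc n →L[ℝ] ℝ) (Q : Euc n →L[ℝ] Euc n →L[ℝ] ℝ),
    Tendsto (fun y => |f y - f x - L (y - x) - Q (y - x) (y - x)| / ‖y - x‖ ^ 2)
      (𝓝[≠] x) (𝓝 0)

lemma IsNorm.zero {n : ℕ} {φ : Euc n → ℝ} (hφ : IsNorm φ) : φ 0 = 0 :=
  (hφ.1 0).mpr rfl

lemma IsNorm.neg {n : ℕ} {φ : Euc n → ℝ} (hφ : IsNorm φ) (x : Euc n) : φ (-x) = φ x := by
  have := hφ.2.1 (-1) x
  simpa using this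

lemma IsNorm.nonneg {n : ℕ} {φ : Euc n → ℝ} (hφ : IsNorm φ) (x : Euc n) : 0 ≤ φ x := by
  have h := hφ.2.2 x (-x)
  rw [add_neg_cancel, hφ.zero, hφ.neg] at h
  linarith

lemma IsNorm.sum_le {n : ℕ} {φ : Euc n → ℝ} (hφ : IsNorm φ) {ι : Type*} (s : Finset ι)
    (f : ι → Euc n) : φ (∑ i ∈ s, f i) ≤ ∑ i ∈ s, φ (f i) := by
  classical
  induction s using Finset.cons_induction with
  | empty => simp [hφ.zero]
  | cons i s hi ih =>
    rw [Finset.sum_cons, Finset.sum_cons]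
    exact le_trans (hφ.2.2 _ _) (by linarith)

lemma coord_le_norm {n : ℕ} (x : Euc n) (i : Fin n) : |x i| ≤ ‖x‖ := by
  rw [EuclideanSpace.norm_eq]
  have h1 : |x i| = Real.sqrt (‖x i‖ ^ 2) := by
    rw [Real.sqrt_sq_eq_abs]; simp
  rw [h1]
  apply Real.sqrt_le_sqrt
  exact Finset.single_le_sum (f := fun j => ‖x j‖ ^ 2) (fun j _ => sq_nonneg _)
    (Finset.mem_univ i)

lemma IsNorm.le_const_norm {n : ℕ} {φ : Euc n → ℝ} (hφ : IsNorm φ) :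
    ∃ C : ℝ, 0 ≤ C ∧ ∀ x, φ x ≤ C * ‖x‖ := by
  refine ⟨∑ i, φ (EuclideanSpace.single i (1:ℝ)), Finset.sum_nonneg fun i _ => hφ.nonneg _,
    fun x => ?_⟩
  have hx : x = ∑ i, x i • EuclideanSpace.single i (1:ℝ) := by
    ext j
    rw [WithLp.ofLp_sum, Fintype.sum_apply]
    simp [EuclideanSpace.single_apply]
  calc φ x ≤ ∑ i, φ (x i • EuclideanSpace.single i (1:ℝ)) := by
        conv_lhs => rw [hx]
        exact hφ.sum_le _ _
    _ = ∑ i, |x i| * φ (EuclideanSpace.single i (1:ℝ)) := by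
        simp [hφ.2.1]
    _ ≤ ∑ i, ‖x‖ * φ (EuclideanSpace.single i (1:ℝ)) := by
        apply Finset.sum_le_sum
        intro i _
        exact mul_le_mul_of_nonneg_right (coord_le_norm x i) (hφ.nonneg _)
    _ = (∑ i, φ (EuclideanSpace.single i (1:ℝ))) * ‖x‖ := by
        rw [Finset.sum_mul]; simp [mul_comm]

section dist
variable {n : ℕ} {φ : Euc n → ℝ} (hφ : IsNorm φ) {K : Set (Euc n)} (hne : K.Nonempty)
include hφ

lemma distφ_le (x : Euc n) {y : Euc n} (hy : y ∈ K) : distφ φ K x ≤ φ (x - y) :=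
  csInf_le ⟨0, fun r ⟨z, _, hz⟩ => hz ▸ hφ.nonneg _⟩ ⟨y, hy, rfl⟩

include hne in
lemma distφ_nonneg (x : Euc n) : 0 ≤ distφ φ K x := by
  obtain ⟨y, hy⟩ := hne
  exact le_csInf ⟨_, y, hy, rfl⟩ (fun r ⟨z, _, hz⟩ => hz ▸ hφ.nonneg _)

include hne in
lemma distφ_triangle (x y : Euc n) : distφ φ K x ≤ distφ φ K y + φ (x - y) := by
  obtain ⟨z₀, hz₀⟩ := hne
  have h : ∀ z ∈ K, distφ φ K x - φ (x - y) ≤ φ (y - z) := by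
    intro z hz
    have h1 : distφ φ K x ≤ φ (x - z) := distφ_le hφ x hz
    have h2 : φ (x - z) ≤ φ (x - y) + φ (y - z) := by
      have := hφ.2.2 (x - y) (y - z)
      simpa [sub_add_sub_cancel] using this
    linarith
  have := le_csInf (s := {r | ∃ y' ∈ K, r = φ (y - y')}) ⟨_, z₀, hz₀, rfl⟩
    (fun r ⟨z, hz, hr⟩ => hr ▸ h z hz)
  have hd : distφ φ K y = sInf {r | ∃ y' ∈ K, r = φ (y - y')} := rfl
  linarith [hd ▸ this]

include hne in
lemma distφ_lipschitz : ∃ C : ℝ, 0 ≤ C ∧ ∀ x y : Euc n,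
    |distφ φ K x - distφ φ K y| ≤ C * ‖x - y‖ := by
  obtain ⟨C, hC0, hC⟩ := hφ.le_const_norm
  refine ⟨C, hC0, fun x y => ?_⟩
  rw [abs_le]
  constructor
  · have := distφ_triangle hφ hne y x
    have h2 := hC (y - x)
    have : ‖y - x‖ = ‖x - y‖ := by rw [norm_sub_rev]
    nlinarith [distφ_triangle hφ hne y x, hC (y - x), norm_sub_rev x y]
  · have := distφ_triangle hφ hne x y
    nlinarith [hC (x - y)]

include hne in
lemma distφ_segment {a u : Euc n} (ha : a ∈ K) (hu : φ u = 1) {s t : ℝ}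
    (hs : distφ φ K (a + s • u) = s) (ht0 : 0 ≤ t) (hts : t ≤ s) :
    distφ φ K (a + t • u) = t := by
  have hub : distφ φ K (a + t • u) ≤ t := by
    have := distφ_le hφ (K := K) (a + t • u) ha
    simpa [hφ.2.1, abs_of_nonneg ht0, hu] using this
  have hlb : t ≤ distφ φ K (a + t • u) := by
    have htr := distφ_triangle hφ hne (a + s • u) (a + t • u)
    have hdiff : (a + s • u) - (a + t • u) = (s - t) • u := by
      rw [sub_smul]; abel
    rw [hdiff, hφ.2.1, abs_of_nonneg (by linarith), hu, hs] at htr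
    linarith
  linarith

end dist

theorem stmt5' {n : ℕ} (φ : Euc n → ℝ) (hφ : IsNorm φ) (K : Set (Euc n))
    (hK : IsClosed K) (a u : ℕ → Euc n) (a₀ u₀ : Euc n)
    (hmem : ∀ i, (a i, u i) ∈ {p : Euc n × Euc n | p.1 ∈ K ∧ φ p.2 = 1 ∧ ∃ s : ℝ, 0 < s ∧ distφ φ K (p.1 + s • p.2) = s})
    (h0 : (a₀, u₀) ∈ {p : Euc n × Euc n | p.1 ∈ K ∧ φ p.2 = 1 ∧ ∃ s : ℝ, 0 < s ∧ distφ φ K (p.1 + s • p.2) = s})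
    (hca : Tendsto a atTop (𝓝 a₀)) (hcu : Tendsto u atTop (𝓝 u₀)) :
    Filter.limsup (fun i => sSup {r : ℝ≥0∞ | ∃ s : ℝ, 0 < s ∧ r = ENNReal.ofReal s ∧ distφ φ K (a i + s • u i) = s}) atTop
      ≤ sSup {r : ℝ≥0∞ | ∃ s : ℝ, 0 < s ∧ r = ENNReal.ofReal s ∧ distφ φ K (a₀ + s • u₀) = s} := by
  obtain ⟨ha₀K, hu₀, s₀, hs₀pos, hs₀⟩ := h0
  have hne : K.Nonempty := ⟨a₀, ha₀K⟩
  by_contra hcon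
  rw [not_le] at hcon
  obtain ⟨c, hc1, hc2⟩ := exists_between hcon
  have hcT : c ≠ ⊤ := (lt_of_lt_of_le hc2 le_top).ne
  have hRpos : (0:ℝ≥0∞) < sSup {r : ℝ≥0∞ | ∃ s : ℝ, 0 < s ∧ r = ENNReal.ofReal s ∧ distφ φ K (a₀ + s • u₀) = s} :=
    lt_of_lt_of_le (by simpa using hs₀pos) (le_sSup ⟨s₀, hs₀pos, rfl, hs₀⟩)
  set t := c.toReal with ht
  have htc : ENNReal.ofReal t = c := ENNReal.ofReal_toReal hcT
  have htpos : 0 < t := ENNReal.toReal_pos (lt_of_le_of_lt hRpos.le hc1).ne' hcT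
  have hfreq : ∃ᶠ i in atTop,
      c < sSup {r : ℝ≥0∞ | ∃ s : ℝ, 0 < s ∧ r = ENNReal.ofReal s ∧ distφ φ K (a i + s • u i) = s} :=
    frequently_lt_of_lt_limsup isCobounded_le_of_bot hc2
  have hfreq2 : ∃ᶠ i in atTop, distφ φ K (a i + t • u i) = t := by
    refine hfreq.mono (fun i hi => ?_)
    obtain ⟨r, ⟨s, hs0, rfl, hds⟩, hlt⟩ := lt_sSup_iff.mp hi
    have hts : t ≤ s := by
      by_contra h
      push_neg at h
      exact absurd hlt (not_lt.mpr (by rw [← htc]; exact ENNReal.ofReal_le_ofReal h.le))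
    exact distφ_segment hφ hne (hmem i).1 (hmem i).2.1 hds htpos.le hts
  obtain ⟨C, hC0, hC⟩ := distφ_lipschitz hφ hne
  have hxconv : Tendsto (fun i => a i + t • u i) atTop (𝓝 (a₀ + t • u₀)) :=
    hca.add (hcu.const_smul t)
  have hnorm : Tendsto (fun i => ‖(a i + t • u i) - (a₀ + t • u₀)‖) atTop (𝓝 0) :=
    tendsto_iff_norm_sub_tendsto_zero.mp hxconv
  have h0' : Tendsto (fun i => distφ φ K (a i + t • u i) - distφ φ K (a₀ + t • u₀)) atTop (𝓝 0) := by
    refine squeeze_zero_norm (a := fun i => C * ‖(a i + t • u i) - (a₀ + t • u₀)‖)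
      (fun i => ?_) (by simpa using hnorm.const_mul C)
    rw [Real.norm_eq_abs]
    exact hC _ _
  have hdconv : Tendsto (fun i => distφ φ K (a i + t • u i)) atTop
      (𝓝 (distφ φ K (a₀ + t • u₀))) := by
    simpa using h0'.add_const (distφ φ K (a₀ + t • u₀))
  have heq : distφ φ K (a₀ + t • u₀) = t :=
    tendsto_nhds_unique_of_frequently_eq hdconv tendsto_const_nhds hfreq2
  exact absurd hc1 (not_lt.mpr (htc ▸ le_sSup ⟨t, htpos, rfl, heq⟩))

theorem stmt5 {n : ℕ} (φ : Euc n → ℝ) (hφ : IsNorm φ) (K : Set (Euc n))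
    (hK : IsClosed K) (a u : ℕ → Euc n) (a₀ u₀ : Euc n)
    (hmem : ∀ i, (a i, u i) ∈ normalBundle φ K)
    (h0 : (a₀, u₀) ∈ normalBundle φ K)
    (hca : Tendsto a atTop (𝓝 a₀)) (hcu : Tendsto u atTop (𝓝 u₀)) :
    Filter.limsup (fun i => reachφ φ K (a i, u i)) atTop ≤ reachφ φ K (a₀, u₀) := by
  exact stmt5' φ hφ K hK a u a₀ u₀ hmem h0 hca hcu
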